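/- Let σ be a positive n×n matrix measure with finite moments, let r be a nonzero null vector polynomial of minimal height h_1 (every nonzero null polynomial has height ≥ h_1), and let p_1,...,p_{h_1} be the orthonormal vector polynomials produced by the first h_1 Gram–Schmidt iterations applied to e_1, e_2,..., with h(p_k) = k−1. Then the Gram–Schmidt vector s = e_{h_1+1} − Σ_{i=1}^{h_1} ⟨p_i, e_{h_1+1}⟩ p_i has zero norm in L_2(R,σ). -/

import Mathlib

open Polynomial

/-- The height of an `n`-dimensional vector polynomial (0-indexed components):
`h(r) = max_j (n · deg R_j + j)`, with `deg 0 = ⊥` and `h(0) = ⊥`. -/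
noncomputable def height {n : ℕ} (r : Fin n → Polynomial ℂ) : WithBot ℕ :=
  Finset.univ.sup fun j : Fin n => WithBot.map (fun d => n * d + (j : ℕ)) (r j).degree

lemma height_eq_bot_iff {n : ℕ} (q : Fin n → Polynomial ℂ) : height q = ⊥ ↔ q = 0 := by
  unfold height
  rw [Finset.sup_eq_bot_iff]
  constructor
  · intro h; funext j
    have := h j (Finset.mem_univ j)
    rw [WithBot.map_eq_bot_iff, degree_eq_bot] at this
    simpa using this
  · rintro rfl j -
    simp [degree_eq_bot]

lemma height_le_comp {n : ℕ} {q : Fin n → Polynomial ℂ} {m : WithBot ℕ}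
    (hq : height q ≤ m) (j : Fin n) :
    WithBot.map (fun d => n * d + (j : ℕ)) ((q j).degree) ≤ m := by
  unfold height at hq
  exact le_trans (Finset.le_sup (f := fun j : Fin n =>
    WithBot.map (fun d => n * d + (j : ℕ)) (q j).degree) (Finset.mem_univ j)) hq

lemma exists_reduce {n : ℕ} (hn : 0 < n) (k : ℕ) (q v : Fin n → Polynomial ℂ)
    (hq : height q ≤ (k : WithBot ℕ)) (hv : height v = (k : WithBot ℕ)) :
    ∃ c : ℂ, height (q - c • v) < (k : WithBot ℕ) := by
  haveI : Nonempty (Fin n) := ⟨⟨0, hn⟩⟩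
  obtain ⟨j, -, hj⟩ := Finset.exists_mem_eq_sup Finset.univ Finset.univ_nonempty
    (fun j : Fin n => WithBot.map (fun d => n * d + (j : ℕ)) (v j).degree)
  rw [height] at hv
  rw [hv] at hj
  -- extract the degree of v j
  obtain ⟨d, hd, hfd⟩ : ∃ d : ℕ, (v j).degree = (d : WithBot ℕ) ∧ n * d + (j : ℕ) = k := by
    cases hdeg : (v j).degree with
    | bot => rw [hdeg] at hj; simp at hj
    | coe d =>
      rw [hdeg, WithBot.map_coe, Nat.cast_withBot] at hj
      exact ⟨d, rfl, WithBot.coe_eq_coe.mp hj.symm⟩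
  have hmod : ∀ (i : Fin n) (e : ℕ), n * e + (i : ℕ) = k → (i : ℕ) = k % n := by
    intro i e h
    rw [← h, Nat.mul_add_mod, Nat.mod_eq_of_lt i.isLt]
  have hvj0 : (v j).coeff d ≠ 0 := coeff_ne_zero_of_eq_degree hd
  set c : ℂ := (q j).coeff d / (v j).coeff d with hc
  refine ⟨c, ?_⟩
  have hqle := fun i => height_le_comp hq i
  have hvle := fun i => height_le_comp hv.le i
  -- degree of q j is ≤ d
  have hdegle : (q j).degree ≤ (d : WithBot ℕ) := by
    cases hdeg : (q j).degree with
    | bot => exact bot_le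
    | coe e =>
      have h0 := hqle j
      rw [hdeg, WithBot.map_coe, Nat.cast_withBot, WithBot.coe_le_coe] at h0
      have h3 : e ≤ d := Nat.le_of_mul_le_mul_left (by omega) hn
      rw [Nat.cast_withBot]
      exact WithBot.coe_le_coe.mpr h3
  -- degree of the difference at j is < d
  have hdiffj : (q j - c • v j).degree < (d : WithBot ℕ) := by
    rw [degree_lt_iff_coeff_zero]
    intro m hm
    rw [coeff_sub, coeff_smul, smul_eq_mul]
    rcases eq_or_lt_of_le hm with h | h
    · subst h
      rw [hc, div_mul_cancel₀ _ hvj0, sub_self]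
    · have hdm : (d : WithBot ℕ) < (m : WithBot ℕ) := by exact_mod_cast h
      rw [coeff_eq_zero_of_degree_lt (lt_of_le_of_lt hdegle hdm),
        coeff_eq_zero_of_degree_lt (lt_of_le_of_lt hd.le hdm), mul_zero, sub_self]
  rw [height]
  refine (Finset.sup_lt_iff (by exact WithBot.bot_lt_coe k)).mpr ?_
  intro i _
  have happ : (q - c • v) i = q i - c • v i := rfl
  by_cases hij : i = j
  · subst hij
    rw [happ]
    cases hdd : (q i - c • v i).degree with
    | bot =>
      simp only [WithBot.map_bot]
      exact WithBot.bot_lt_coe k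
    | coe e =>
      rw [hdd, Nat.cast_withBot, WithBot.coe_lt_coe] at hdiffj
      have hlt : n * e + (i : ℕ) < k := by
        have h1 : n * e + n ≤ n * d := by
          calc n * e + n = n * (e + 1) := by ring
            _ ≤ n * d := Nat.mul_le_mul_left n (by omega)
        have h2 := i.isLt
        omega
      rw [WithBot.map_coe, Nat.cast_withBot]
      exact WithBot.coe_lt_coe.mpr hlt
  · -- for components ≠ j, any degree bound ≤ k is automatically < k
    have key : ∀ P : Polynomial ℂ,
        WithBot.map (fun e => n * e + (i : ℕ)) P.degree ≤ (k : WithBot ℕ) →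
        WithBot.map (fun e => n * e + (i : ℕ)) P.degree < (k : WithBot ℕ) := by
      intro P hP
      refine lt_of_le_of_ne hP ?_
      intro hEq
      cases hdeg : P.degree with
      | bot => rw [hdeg] at hEq; simp at hEq
      | coe e =>
        rw [hdeg, WithBot.map_coe, Nat.cast_withBot] at hEq
        have heq2 : n * e + (i : ℕ) = k := WithBot.coe_eq_coe.mp hEq
        exact hij (Fin.ext (by rw [hmod i e heq2, hmod j d hfd]))
    have mono : Monotone (WithBot.map fun e => n * e + (i : ℕ)) :=
      Monotone.withBot_map (fun a b hab => Nat.add_le_add_right (Nat.mul_le_mul_left n hab) _)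
    have hdle : (q i - c • v i).degree ≤ max (q i).degree (v i).degree := by
      refine le_trans (degree_sub_le _ _) ?_
      exact max_le_max le_rfl (degree_smul_le _ _)
    rw [happ]
    calc WithBot.map (fun e => n * e + (i : ℕ)) (q i - c • v i).degree
        ≤ max (WithBot.map (fun e => n * e + (i : ℕ)) (q i).degree)
            (WithBot.map (fun e => n * e + (i : ℕ)) (v i).degree) := by
          refine le_trans (mono hdle) ?_
          rw [mono.map_max]
      _ < (k : WithBot ℕ) := max_lt (key _ (hqle i)) (key _ (hvle i))

lemma span_lemma {n h₁ : ℕ} (hn : 0 < n) (r : Fin n → Polynomial ℂ)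
    (p : Fin h₁ → (Fin n → Polynomial ℂ))
    (hrh : height r = (h₁ : WithBot ℕ))
    (hph : ∀ k, height (p k) = ((k : ℕ) : WithBot ℕ)) :
    ∀ (m : ℕ), m ≤ h₁ + 1 → ∀ q : Fin n → Polynomial ℂ, height q < (m : WithBot ℕ) →
      ∃ (a : ℂ) (b : Fin h₁ → ℂ), q = a • r + ∑ i, b i • p i := by
  intro m
  induction m with
  | zero =>
    intro _ q hq
    have hq0 : q = 0 := by
      rw [← height_eq_bot_iff]
      have h0 : height q < 0 := by exact_mod_cast hq
      exact Nat.WithBot.lt_zero_iff.mp h0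
    exact ⟨0, 0, by simp [hq0]⟩
  | succ m ih =>
    intro hm q hq
    by_cases h : height q < (m : WithBot ℕ)
    · exact ih (by omega) q h
    · have hqle : height q ≤ (m : WithBot ℕ) := by
        rcases le_or_gt (height q) (m : WithBot ℕ) with h' | h'
        · exact h'
        · exfalso
          cases hd : height q with
          | bot => rw [hd] at h'; exact absurd h' (by simp)
          | coe e =>
            rw [hd, Nat.cast_withBot, WithBot.coe_lt_coe] at h' hq
            omega
      have hqm : height q = (m : WithBot ℕ) := le_antisymm hqle (not_lt.1 h)
      by_cases hlt : m < h₁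
      · obtain ⟨c, hc⟩ := exists_reduce hn m q (p ⟨m, hlt⟩) hqm.le (hph ⟨m, hlt⟩)
        obtain ⟨a, b, hab⟩ := ih (by omega) _ hc
        refine ⟨a, fun i => b i + if i = ⟨m, hlt⟩ then c else 0, ?_⟩
        have hsplit : q = (q - c • p ⟨m, hlt⟩) + c • p ⟨m, hlt⟩ := by abel
        rw [hsplit, hab]
        simp only [add_smul, Finset.sum_add_distrib, ite_smul, zero_smul,
          Finset.sum_ite_eq' Finset.univ]
        simp
        abel
      · have hmh : m = h₁ := by omega
        subst hmh
        obtain ⟨c, hc⟩ := exists_reduce hn m q r hqm.le hrh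
        obtain ⟨a, b, hab⟩ := ih (by omega) _ hc
        refine ⟨a + c, b, ?_⟩
        have hsplit : q = (q - c • r) + c • r := by abel
        rw [hsplit, hab, add_smul]
        abel

/-- The vector polynomial `e_{nk+i}(z) = z^k e_i`; in 0-indexed form `eVP n s = z^(s/n) e_(s%n)`,
corresponding to the 1-indexed `e_{s+1}`. -/
noncomputable def eVP (n : ℕ) (s : ℕ) : Fin n → Polynomial ℂ :=
  fun j => if (j : ℕ) = s % n then X ^ (s / n) else 0

lemma height_eVP_le (n : ℕ) (s : ℕ) : height (eVP n s) ≤ (s : WithBot ℕ) := by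
  rw [height]
  refine Finset.sup_le ?_
  intro j _
  unfold eVP
  by_cases hj : (j : ℕ) = s % n
  · rw [if_pos hj, degree_X_pow, Nat.cast_withBot, WithBot.map_coe]
    rw [Nat.cast_withBot, WithBot.coe_le_coe, hj]
    exact (Nat.div_add_mod s n).le
  · rw [if_neg hj, degree_zero, WithBot.map_bot]
    exact bot_le

/-- A positive `n×n` matrix measure `σ` on `ℝ` with all moments finite, encoded through the
(possibly degenerate) sesquilinear form `B f g = ∫_ℝ ⟨f(t), dσ(t) g(t)⟩` it induces on
`n`-dimensional vector polynomials (antilinear in the first argument). The axiom `mul_symm`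
expresses that multiplication by the real variable `t` is symmetric for the form. -/
structure MatMeasureForm (n : ℕ) where
  B : (Fin n → Polynomial ℂ) → (Fin n → Polynomial ℂ) → ℂ
  add_right : ∀ f g h, B f (g + h) = B f g + B f h
  smul_right : ∀ (c : ℂ) f g, B f (c • g) = c * B f g
  conj_symm : ∀ f g, B g f = (starRingEnd ℂ) (B f g)
  nonneg : ∀ f, 0 ≤ (B f f).re
  mul_symm : ∀ f g, B (fun j => X * f j) g = B f (fun j => X * g j)

namespace MatMeasureForm

variable {n : ℕ} (M : MatMeasureForm n)

lemma add_left (f g k : Fin n → Polynomial ℂ) : M.B (f + g) k = M.B f k + M.B g k := by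
  rw [M.conj_symm, M.add_right, map_add, ← M.conj_symm, ← M.conj_symm]

lemma smul_left (c : ℂ) (f k : Fin n → Polynomial ℂ) :
    M.B (c • f) k = (starRingEnd ℂ) c * M.B f k := by
  rw [M.conj_symm, M.smul_right, map_mul, ← M.conj_symm]

lemma zero_right (f : Fin n → Polynomial ℂ) : M.B f 0 = 0 := by
  have := M.smul_right 0 f 0
  simpa using this

lemma sub_right (f g k : Fin n → Polynomial ℂ) : M.B f (g - k) = M.B f g - M.B f k := by
  have : g - k = g + (-1 : ℂ) • k := by
    simp [sub_eq_add_neg]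
  rw [this, M.add_right, M.smul_right]
  ring

lemma sum_right {ι : Type*} (s : Finset ι) (f : Fin n → Polynomial ℂ)
    (g : ι → (Fin n → Polynomial ℂ)) :
    M.B f (∑ i ∈ s, g i) = ∑ i ∈ s, M.B f (g i) := by
  classical
  induction s using Finset.induction_on with
  | empty => simpa using M.zero_right f
  | insert _ _ hnotmem ih =>
    rw [Finset.sum_insert hnotmem, Finset.sum_insert hnotmem, M.add_right, ih]

lemma null_right (r : Fin n → Polynomial ℂ) (hr : M.B r r = 0)
    (f : Fin n → Polynomial ℂ) : M.B f r = 0 := by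
  by_contra hα
  set α := M.B f r with hαdef
  have hns : 0 < Complex.normSq α := Complex.normSq_pos.2 hα
  set t : ℝ := ((M.B f f).re + 1) / (2 * Complex.normSq α) with ht
  set c : ℂ := -(t : ℂ) * (starRingEnd ℂ) α with hcdef
  have hexp : M.B (f + c • r) (f + c • r)
      = M.B f f + (starRingEnd ℂ) c * (starRingEnd ℂ) α + c * α := by
    rw [M.add_right, M.smul_right, M.add_left, M.add_left, M.smul_left, M.smul_left,
      hr, ← M.conj_symm]
    rw [M.conj_symm f r]
    ring
  have hre : (M.B (f + c • r) (f + c • r)).re = (M.B f f).re - 2 * (t * Complex.normSq α) := by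
    rw [hexp]
    have h1 : c * α = -((t * Complex.normSq α : ℝ) : ℂ) := by
      rw [hcdef, mul_assoc, mul_comm ((starRingEnd ℂ) α) α, Complex.mul_conj]
      push_cast
      ring
    have h2 : (starRingEnd ℂ) c * (starRingEnd ℂ) α = -((t * Complex.normSq α : ℝ) : ℂ) := by
      rw [← map_mul, h1]
      simp
    rw [h1, h2]
    simp
    ring
  have hval : t * Complex.normSq α = ((M.B f f).re + 1) / 2 := by
    rw [ht]
    field_simp
  have := M.nonneg (f + c • r)
  rw [hre, hval] at this
  linarith

end MatMeasureForm

/-- Let `r` be a nonzero null vector polynomial of minimal height `h₁` (every nonzero null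
polynomial has height `≥ h₁`), and let `p_1,…,p_{h₁}` be the orthonormal vector polynomials
produced by the first `h₁` Gram–Schmidt iterations applied to `e_1, e_2, …` (so `h(p_k) = k-1`).
Then the Gram–Schmidt vector `s = e_{h₁+1} − ∑_{i=1}^{h₁} ⟨p_i, e_{h₁+1}⟩ p_i` has zero norm.
(0-indexed: `e_{h₁+1} = eVP n h₁` and `p : Fin h₁` with `h(p k) = k`.) -/
theorem gram_schmidt_produces_null (n : ℕ) (M : MatMeasureForm n) (h₁ : ℕ)
    (r : Fin n → Polynomial ℂ) (hr0 : r ≠ 0) (hrnull : M.B r r = 0)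
    (hrh : height r = (h₁ : WithBot ℕ))
    (hmin : ∀ t : Fin n → Polynomial ℂ, t ≠ 0 → M.B t t = 0 →
      (h₁ : WithBot ℕ) ≤ height t)
    (p : Fin h₁ → (Fin n → Polynomial ℂ))
    (horth : ∀ i j, M.B (p i) (p j) = if i = j then 1 else 0)
    (hph : ∀ k, height (p k) = ((k : ℕ) : WithBot ℕ)) :
    M.B (eVP n h₁ - ∑ i, M.B (p i) (eVP n h₁) • p i)
        (eVP n h₁ - ∑ i, M.B (p i) (eVP n h₁) • p i) = 0 := by
  classical
  rcases Nat.eq_zero_or_pos n with hn0 | hn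
  · subst hn0
    exact absurd (_root_.funext fun j : Fin 0 => j.elim0) hr0
  set e := eVP n h₁ with he
  have heh : height e < ((h₁ + 1 : ℕ) : WithBot ℕ) := by
    refine lt_of_le_of_lt (height_eVP_le n h₁) ?_
    rw [Nat.cast_withBot, Nat.cast_withBot]
    exact WithBot.coe_lt_coe.mpr (by omega)
  obtain ⟨a, b, hab⟩ := span_lemma hn r p hrh hph (h₁ + 1) le_rfl e heh
  set s := e - ∑ i, M.B (p i) e • p i with hs
  have hpis : ∀ i, M.B (p i) s = 0 := by
    intro i
    rw [hs, M.sub_right, M.sum_right]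
    have hterm : ∀ j, M.B (p i) (M.B (p j) e • p j)
        = M.B (p j) e * (if i = j then 1 else 0) := by
      intro j; rw [M.smul_right, horth i j]
    rw [Finset.sum_congr rfl (fun j _ => hterm j)]
    simp [mul_ite]
  have hspi : ∀ i, M.B s (p i) = 0 := by
    intro i
    rw [M.conj_symm, hpis i, map_zero]
  have hsr : M.B s r = 0 := M.null_right r hrnull s
  have hse : M.B s e = 0 := by
    rw [hab, M.add_right, M.smul_right, M.sum_right, hsr]
    have hterm : ∀ i, M.B s (b i • p i) = 0 := fun i => by
      rw [M.smul_right, hspi i, mul_zero]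
    simp [hterm]
  have hgoal : M.B s s = M.B s (e - ∑ i, M.B (p i) e • p i) := by rw [← hs]
  rw [hgoal, M.sub_right, M.sum_right, hse]
  have hterm : ∀ i, M.B s (M.B (p i) e • p i) = 0 := fun i => by
    rw [M.smul_right, hspi i, mul_zero]
  simp [hterm]
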